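/- Let R be a commutative ring, P₀ a finitely generated projective R-module of rank 2, n ≥ 4, and P_n = P₀ ⊕ Re₃ ⊕ ⋯ ⊕ Re_n. Let a = (a₀, a₃, …, a_n) ∈ Um(P_n) and let I = ⟨a₄, …, a_n⟩ ⊆ R. Let b = (b₀, b₃) and b' = (b'₀, b'₃) be R-linear maps P₃ = P₀ ⊕ Re₃ → R whose induced maps b̄, b̄' : P₃/IP₃ → R/I are surjective and lie in the same E(P₃/IP₃)-orbit, i.e. b̄' = b̄ ∘ φ̄ for some φ̄ ∈ E(P₃/IP₃). Then (b₀, b₃, a₄, …, a_n) and (b'₀, b'₃, a₄, …, a_n) are surjective R-linear maps P_n → R lying in the same E(P_n)-orbit; in other words, the assignment (b̄₀, b̄₃) ↦ class of (b₀, b₃, a₄, …, a_n) induces a well-defined map Φ(a) : Um(P₃/IP₃)/E(P₃/IP₃) → Um(P_n)/E(P_n). -/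
import Mathlib


open Function

section Defs

variable (R : Type*) [CommRing R] (M : Type*) [AddCommGroup M] [Module R M] (m : ℕ)

/-- `Pn R M m` models `P_n = P₀ ⊕ Re₃ ⊕ ⋯ ⊕ Re_n` with `m = n - 2` free summands. -/
abbrev Pn := M × (Fin m → R)

/-- Projection onto `P₀`. -/
def proj0 : Pn R M m →ₗ[R] M := LinearMap.fst R M (Fin m → R)

/-- Projection `π_{k,n}` onto the `i`-th free summand. -/
def projF (i : Fin m) : Pn R M m →ₗ[R] R :=
  (LinearMap.proj i).comp (LinearMap.snd R M (Fin m → R))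

/-- Inclusion of `P₀`. -/
def incl0 : M →ₗ[R] Pn R M m := LinearMap.inl R M (Fin m → R)

/-- Inclusion of the `i`-th free summand. -/
def inclF (i : Fin m) : R →ₗ[R] Pn R M m :=
  (LinearMap.inr R M (Fin m → R)).comp (LinearMap.single R (fun _ => R) i)

/-- An endomorphism is elementary if it is `id + s` where `s` maps one direct
summand of `P₀ ⊕ Re₃ ⊕ ⋯ ⊕ Re_n` into a different one. -/
def IsElementary (φ : Module.End R (Pn R M m)) : Prop :=
  (∃ i : Fin m, ∃ t : M →ₗ[R] R, φ = LinearMap.id + (inclF R M m i) ∘ₗ t ∘ₗ (proj0 R M m)) ∨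
  (∃ i : Fin m, ∃ t : R →ₗ[R] M, φ = LinearMap.id + (incl0 R M m) ∘ₗ t ∘ₗ (projF R M m i)) ∨
  (∃ i j : Fin m, i ≠ j ∧ ∃ t : R →ₗ[R] R,
    φ = LinearMap.id + (inclF R M m i) ∘ₗ t ∘ₗ (projF R M m j))

/-- `E(P_n)`: the subgroup of `Aut(P_n)` generated by elementary automorphisms. -/
def Elem : Subgroup (Module.End R (Pn R M m))ˣ :=
  Subgroup.closure { φ : (Module.End R (Pn R M m))ˣ | IsElementary R M m ↑φ }

/-- The `i`-th free coordinate `a_i = a(e_i)` of a linear map `a : P_n → R`. -/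
def coord (a : Pn R M m →ₗ[R] R) (i : Fin m) : R := a (inclF R M m i 1)

/-- The map obtained from `a` by replacing its `i`-th free coordinate by `c`. -/
def replace (a : Pn R M m →ₗ[R] R) (i : Fin m) (c : R) : Pn R M m →ₗ[R] R :=
  a + (c - coord R M m a i) • projF R M m i

/-- A module has rank two if its localization at every prime has rank two. -/
def RankTwo : Prop :=
  ∀ (p : Ideal R) (_ : p.IsPrime),
    Module.finrank (Localization.AtPrime p) (LocalizedModule p.primeCompl M) = 2

/-- Given `b = (b₀, b₃) : P₃ → R` and `a : P_n → R`, the map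
`(b₀, b₃, a₄, …, a_n) : P_n → R`. -/
def combine (h : 0 < m) (b : M × R →ₗ[R] R) (a : Pn R M m →ₗ[R] R) :
    Pn R M m →ₗ[R] R :=
  b ∘ₗ (LinearMap.prod (proj0 R M m) (projF R M m ⟨0, h⟩)) +
    ∑ i ∈ Finset.univ.erase (⟨0, h⟩ : Fin m), coord R M m a i • projF R M m i

end Defs

section Aux

variable {R : Type*} [CommRing R] {M : Type*} [AddCommGroup M] [Module R M] {m : ℕ}

@[simp] lemma proj0_apply (x : Pn R M m) : proj0 R M m x = x.1 := rfl
@[simp] lemma projF_apply (i : Fin m) (x : Pn R M m) : projF R M m i x = x.2 i := rfl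
@[simp] lemma incl0_apply (p : M) : incl0 R M m p = (p, 0) := rfl
@[simp] lemma inclF_apply (i : Fin m) (r : R) : inclF R M m i r = (0, Pi.single i r) := rfl

/-- `1 + s` as a unit, when `s * s = 0`. -/
def elemUnit {N : Type*} [AddCommGroup N] [Module R N] (s : Module.End R N)
    (hs : s * s = 0) : (Module.End R N)ˣ :=
  ⟨1 + s, 1 - s, by rw [mul_sub, mul_one, add_mul, one_mul, hs]; abel,
    by rw [sub_mul, one_mul, mul_add, mul_one, hs]; abel⟩

@[simp] lemma elemUnit_val {N : Type*} [AddCommGroup N] [Module R N] (s : Module.End R N)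
    (hs : s * s = 0) : (elemUnit s hs : Module.End R N) = LinearMap.id + s := rfl

lemma combine_apply (h : 0 < m) (b : M × R →ₗ[R] R) (a : Pn R M m →ₗ[R] R) (x : Pn R M m) :
    combine R M m h b a x
      = b (x.1, x.2 ⟨0, h⟩) +
        ∑ i ∈ Finset.univ.erase (⟨0, h⟩ : Fin m), coord R M m a i * x.2 i := by
  simp [combine, LinearMap.sum_apply, smul_eq_mul]

lemma combine_inclF (h : 0 < m) (b : M × R →ₗ[R] R) (a : Pn R M m →ₗ[R] R)
    (i : Fin m) (hi : i ≠ ⟨0, h⟩) (r : R) :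
    combine R M m h b a (inclF R M m i r) = coord R M m a i * r := by
  rw [combine_apply]
  simp only [inclF_apply, Pi.single_eq_of_ne hi]
  have h0 : b (0, (Pi.single i r : Fin m → R) ⟨0, h⟩) = 0 := by
    rw [Pi.single_eq_of_ne (Ne.symm hi)]
    exact map_zero b
  rw [h0, zero_add, Finset.sum_eq_single i]
  · simp
  · intro j hj hji; simp [Pi.single_eq_of_ne hji]
  · intro hmem; exact absurd (Finset.mem_erase.2 ⟨hi, Finset.mem_univ i⟩) hmem

end Aux

set_option maxHeartbeats 1000000 in
/-- Let `R` be a commutative ring, `P₀` a finitely generated projective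
`R`-module of rank `2`, `n ≥ 4` and `P_n = P₀ ⊕ Re₃ ⊕ ⋯ ⊕ Re_n`. Let
`a = (a₀, a₃, …, a_n) : P_n → R` be surjective and `I = ⟨a₄, …, a_n⟩`. Let
`b = (b₀, b₃), b' = (b'₀, b'₃) : P₃ → R` induce surjective maps
`b̄, b̄' : P₃/IP₃ = (P₀/IP₀) ⊕ (R/I) → R/I` lying in the same `E(P₃/IP₃)`-orbit. Then
`(b₀, b₃, a₄, …, a_n)` and `(b'₀, b'₃, a₄, …, a_n)` are surjective and lie in the same
`E(P_n)`-orbit; in other words `Φ(a) : Um(P₃/IP₃)/E(P₃/IP₃) → Um(P_n)/E(P_n)` is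
well defined. -/
theorem statement9 (R : Type*) [CommRing R] (P₀ : Type*) [AddCommGroup P₀] [Module R P₀]
    [Module.Finite R P₀] [Module.Projective R P₀] (hrank : RankTwo R P₀)
    (n : ℕ) (hn : 4 ≤ n) (a : Pn R P₀ (n - 2) →ₗ[R] R) (ha : Function.Surjective a)
    (I : Ideal R)
    (hI : I = Ideal.span {x : R | ∃ i : Fin (n - 2), i ≠ ⟨0, by omega⟩ ∧
      x = coord R P₀ (n - 2) a i})
    (b b' : P₀ × R →ₗ[R] R)
    (bbar b'bar : Pn (R ⧸ I) (P₀ ⧸ (I • ⊤ : Submodule R P₀)) 1 →ₗ[R ⧸ I] R ⧸ I)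
    (hb : ∀ (p : P₀) (r : R),
      bbar ((Submodule.Quotient.mk p : P₀ ⧸ (I • ⊤ : Submodule R P₀)),
        fun _ => Ideal.Quotient.mk I r) = Ideal.Quotient.mk I (b (p, r)))
    (hb' : ∀ (p : P₀) (r : R),
      b'bar ((Submodule.Quotient.mk p : P₀ ⧸ (I • ⊤ : Submodule R P₀)),
        fun _ => Ideal.Quotient.mk I r) = Ideal.Quotient.mk I (b' (p, r)))
    (hbsurj : Function.Surjective bbar) (hb'surj : Function.Surjective b'bar)
    (horbit : ∃ φbar ∈ Elem (R ⧸ I) (P₀ ⧸ (I • ⊤ : Submodule R P₀)) 1,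
      b'bar = bbar ∘ₗ
        (φbar : Module.End (R ⧸ I) (Pn (R ⧸ I) (P₀ ⧸ (I • ⊤ : Submodule R P₀)) 1))) :
    Function.Surjective (combine R P₀ (n - 2) (by omega) b a) ∧
    Function.Surjective (combine R P₀ (n - 2) (by omega) b' a) ∧
      ∃ φ ∈ Elem R P₀ (n - 2),
        (combine R P₀ (n - 2) (by omega) b a) ∘ₗ (φ : Module.End R (Pn R P₀ (n - 2))) =
          combine R P₀ (n - 2) (by omega) b' a := by
  
  classical
  have hm : 0 < n - 2 := by omega
  set Q : Pn R P₀ (n - 2) → Pn (R ⧸ I) (P₀ ⧸ (I • ⊤ : Submodule R P₀)) 1 :=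
    fun x => ((Submodule.Quotient.mk x.1 : P₀ ⧸ (I • ⊤ : Submodule R P₀)),
      fun _ => Ideal.Quotient.mk I (x.2 ⟨0, hm⟩)) with hQdef
  -- additivity of Q
  have hQadd : ∀ x y, Q (x + y) = Q x + Q y := by
    intro x y
    refine Prod.ext ?_ ?_
    · exact Submodule.Quotient.mk_add _
    · funext j
      exact map_add (Ideal.Quotient.mk I) _ _
  have hQsurj : Surjective Q := by
    rintro ⟨u, v⟩
    obtain ⟨p, hp⟩ := Submodule.Quotient.mk_surjective _ u
    obtain ⟨r, hr⟩ := Ideal.Quotient.mk_surjective (v 0)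
    refine ⟨(p, fun _ => r), Prod.ext hp ?_⟩
    funext j
    rw [show j = 0 from Subsingleton.elim j 0]
    exact hr
  have haI : ∀ i : Fin (n - 2), i ≠ ⟨0, hm⟩ → coord R P₀ (n - 2) a i ∈ I := by
    intro i hi
    rw [hI]
    exact Ideal.subset_span ⟨i, hi, rfl⟩
  -- reduction of combine mod I
  have hmod : ∀ (b₀ : P₀ × R →ₗ[R] R)
      (b₀bar : Pn (R ⧸ I) (P₀ ⧸ (I • ⊤ : Submodule R P₀)) 1 →ₗ[R ⧸ I] R ⧸ I),
      (∀ (p : P₀) (r : R),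
        b₀bar ((Submodule.Quotient.mk p : P₀ ⧸ (I • ⊤ : Submodule R P₀)),
          fun _ => Ideal.Quotient.mk I r) = Ideal.Quotient.mk I (b₀ (p, r))) →
      ∀ x, Ideal.Quotient.mk I (combine R P₀ (n - 2) hm b₀ a x) = b₀bar (Q x) := by
    intro b₀ b₀bar hb₀ x
    rw [combine_apply, map_add, map_sum, Finset.sum_eq_zero, add_zero, ← hb₀ x.1 (x.2 ⟨0, hm⟩)]
    intro i hi
    rw [map_mul, Ideal.Quotient.eq_zero_iff_mem.2 (haI i (Finset.mem_erase.1 hi).1), zero_mul]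
  -- surjectivity
  have hsurj : ∀ (b₀ : P₀ × R →ₗ[R] R)
      (b₀bar : Pn (R ⧸ I) (P₀ ⧸ (I • ⊤ : Submodule R P₀)) 1 →ₗ[R ⧸ I] R ⧸ I),
      (∀ (p : P₀) (r : R),
        b₀bar ((Submodule.Quotient.mk p : P₀ ⧸ (I • ⊤ : Submodule R P₀)),
          fun _ => Ideal.Quotient.mk I r) = Ideal.Quotient.mk I (b₀ (p, r))) →
      Surjective b₀bar → Surjective (combine R P₀ (n - 2) hm b₀ a) := by
    intro b₀ b₀bar hb₀ hbs y
    obtain ⟨w, hw⟩ := hbs (Ideal.Quotient.mk I y)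
    obtain ⟨x, hx⟩ := hQsurj w
    have h1 : y - combine R P₀ (n - 2) hm b₀ a x ∈ I := by
      rw [← Ideal.Quotient.eq_zero_iff_mem, map_sub, hmod b₀ b₀bar hb₀ x, hx, hw, sub_self]
    have h2 : (I : Submodule R R) ≤ LinearMap.range (combine R P₀ (n - 2) hm b₀ a) := by
      rw [hI, Ideal.span_le]
      rintro _ ⟨i, hiz, rfl⟩
      exact ⟨inclF R P₀ (n - 2) i 1, by rw [combine_inclF hm b₀ a i hiz, mul_one]⟩
    obtain ⟨x', hx'⟩ := h2 h1
    exact ⟨x' + x, by rw [map_add, hx', sub_add_cancel]⟩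
  -- lifting elements of E(P₃/IP₃)
  have hlift : ∀ u ∈ Elem (R ⧸ I) (P₀ ⧸ (I • ⊤ : Submodule R P₀)) 1,
      ∃ φ ∈ Elem R P₀ (n - 2),
        (∀ x, Q ((φ : Module.End R (Pn R P₀ (n - 2))) x)
            = (u : Module.End (R ⧸ I) (Pn (R ⧸ I) (P₀ ⧸ (I • ⊤ : Submodule R P₀)) 1)) (Q x)) ∧
        (∀ i : Fin (n - 2), i ≠ ⟨0, hm⟩ → ∀ r : R,
          (φ : Module.End R (Pn R P₀ (n - 2))) (inclF R P₀ (n - 2) i r)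
            = inclF R P₀ (n - 2) i r) := by
    intro u hu
    induction hu using Subgroup.closure_induction with
    | mem v hv =>
      rcases hv with ⟨i, t, ht⟩ | ⟨i, t, ht⟩ | ⟨i, j, hij, -⟩
      · -- transvection P₀ → Re₃
        obtain ⟨tl, htl⟩ := Module.projective_lifting_property
          (Submodule.mkQ (I : Submodule R R))
          ((t.restrictScalars R) ∘ₗ Submodule.mkQ (I • ⊤ : Submodule R P₀))
          (Submodule.Quotient.mk_surjective _)
        have htl' : ∀ p : P₀, Ideal.Quotient.mk I (tl p)
            = t (Submodule.Quotient.mk p) := fun p => LinearMap.congr_fun htl p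
        set s : Module.End R (Pn R P₀ (n - 2)) :=
          (inclF R P₀ (n - 2) ⟨0, hm⟩) ∘ₗ tl ∘ₗ (proj0 R P₀ (n - 2)) with hsdef
        have hss : s * s = 0 := by
          apply LinearMap.ext; intro x
          show s (s x) = 0
          simp [hsdef]
        refine ⟨elemUnit s hss, Subgroup.subset_closure (Or.inl ⟨⟨0, hm⟩, tl, rfl⟩),
          fun x => ?_, fun i' hi' r => ?_⟩
        · have h1 : (elemUnit s hss : Module.End R (Pn R P₀ (n - 2))) x = x + s x := rfl
          have h2 : Q (s x) = (0, fun _ => t (Submodule.Quotient.mk x.1)) := by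
            refine Prod.ext ?_ ?_
            · show (Submodule.Quotient.mk ((s x).1) : P₀ ⧸ (I • ⊤ : Submodule R P₀)) = 0
              simp [hsdef]
            · funext j
              show Ideal.Quotient.mk I ((s x).2 ⟨0, hm⟩) = _
              have : (s x).2 ⟨0, hm⟩ = tl x.1 := by simp [hsdef]
              rw [this, htl']
          rw [h1, hQadd, h2, ht, LinearMap.add_apply, LinearMap.id_apply]
          congr 1
          refine Prod.ext (by simp) ?_
          funext j
          simp only [LinearMap.comp_apply, inclF_apply]
          rw [show j = i from Subsingleton.elim j i, Pi.single_eq_same]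
          rfl
        · show inclF R P₀ (n - 2) i' r + s (inclF R P₀ (n - 2) i' r) = _
          have : s (inclF R P₀ (n - 2) i' r) = 0 := by simp [hsdef]
          rw [this, add_zero]
      · -- transvection Re₃ → P₀
        obtain ⟨p₀, hp₀⟩ := Submodule.Quotient.mk_surjective _ (t 1)
        set s : Module.End R (Pn R P₀ (n - 2)) :=
          (incl0 R P₀ (n - 2)) ∘ₗ (LinearMap.toSpanSingleton R P₀ p₀) ∘ₗ
            (projF R P₀ (n - 2) ⟨0, hm⟩) with hsdef
        have hss : s * s = 0 := by
          apply LinearMap.ext; intro x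
          show s (s x) = 0
          simp [hsdef, LinearMap.toSpanSingleton_apply]
        refine ⟨elemUnit s hss,
          Subgroup.subset_closure (Or.inr (Or.inl ⟨⟨0, hm⟩, LinearMap.toSpanSingleton R P₀ p₀, rfl⟩)),
          fun x => ?_, fun i' hi' r => ?_⟩
        · have h1 : (elemUnit s hss : Module.End R (Pn R P₀ (n - 2))) x = x + s x := rfl
          have h2 : Q (s x) = (t (Ideal.Quotient.mk I (x.2 ⟨0, hm⟩)), 0) := by
            refine Prod.ext ?_ ?_
            · show (Submodule.Quotient.mk ((s x).1) : P₀ ⧸ (I • ⊤ : Submodule R P₀)) = _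
              have : (s x).1 = (x.2 ⟨0, hm⟩) • p₀ := by
                simp [hsdef, LinearMap.toSpanSingleton_apply]
              rw [this,
                show (Submodule.Quotient.mk ((x.2 ⟨0, hm⟩) • p₀) : P₀ ⧸ (I • ⊤ : Submodule R P₀))
                  = (Ideal.Quotient.mk I (x.2 ⟨0, hm⟩)) • (Submodule.Quotient.mk p₀) from rfl,
                hp₀, ← map_smul, smul_eq_mul, mul_one]
            · funext j
              show Ideal.Quotient.mk I ((s x).2 ⟨0, hm⟩) = 0
              have : (s x).2 ⟨0, hm⟩ = 0 := by simp [hsdef]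
              rw [this, map_zero]
          rw [h1, hQadd, h2, ht]
          rfl
        · show inclF R P₀ (n - 2) i' r + s (inclF R P₀ (n - 2) i' r) = _
          have : s (inclF R P₀ (n - 2) i' r) = 0 := by
            have h3 : (inclF R P₀ (n - 2) i' r).2 ⟨0, hm⟩ = 0 := by
              simp [Pi.single_eq_of_ne (Ne.symm hi')]
            show (incl0 R P₀ (n - 2)) ((LinearMap.toSpanSingleton R P₀ p₀)
              ((projF R P₀ (n - 2) ⟨0, hm⟩) (inclF R P₀ (n - 2) i' r))) = 0
            rw [projF_apply, h3, map_zero, map_zero]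
          rw [this, add_zero]
      · exact absurd (Subsingleton.elim i j) hij
    | one =>
      exact ⟨1, one_mem _, fun x => rfl, fun i hi r => rfl⟩
    | mul v w hv hw ihv ihw =>
      obtain ⟨φ, hφ, hφQ, hφF⟩ := ihv
      obtain ⟨ψ, hψ, hψQ, hψF⟩ := ihw
      refine ⟨φ * ψ, mul_mem hφ hψ, fun x => ?_, fun i hi r => ?_⟩
      · show Q ((φ : Module.End R (Pn R P₀ (n - 2))) ((ψ : Module.End R (Pn R P₀ (n - 2))) x))
          = _
        rw [hφQ, hψQ]
        rfl
      · show (φ : Module.End R (Pn R P₀ (n - 2))) ((ψ : Module.End R (Pn R P₀ (n - 2)))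
          (inclF R P₀ (n - 2) i r)) = _
        rw [hψF i hi r, hφF i hi r]
    | inv v hv ih =>
      obtain ⟨φ, hφ, hφQ, hφF⟩ := ih
      refine ⟨φ⁻¹, inv_mem hφ, fun x => ?_, fun i hi r => ?_⟩
      · have h1 : (φ : Module.End R (Pn R P₀ (n - 2)))
            ((↑φ⁻¹ : Module.End R (Pn R P₀ (n - 2))) x) = x := by
          rw [← Module.End.mul_apply, ← Units.val_mul, mul_inv_cancel, Units.val_one,
            Module.End.one_apply]
        have h2 := hφQ ((↑φ⁻¹ : Module.End R (Pn R P₀ (n - 2))) x)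
        rw [h1] at h2
        rw [h2, ← Module.End.mul_apply, ← Units.val_mul, inv_mul_cancel, Units.val_one,
          Module.End.one_apply]
      · conv_lhs => rw [← hφF i hi r]
        rw [← Module.End.mul_apply, ← Units.val_mul, inv_mul_cancel, Units.val_one,
          Module.End.one_apply]
  -- the "Good pair" corrections
  set GP : (P₀ →ₗ[R] R) → R → Prop := fun w l =>
    ∃ ε ∈ Elem R P₀ (n - 2),
      (∀ x : Pn R P₀ (n - 2), ((ε : Module.End R (Pn R P₀ (n - 2))) x).1 = x.1) ∧
      (∀ x : Pn R P₀ (n - 2),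
        ((ε : Module.End R (Pn R P₀ (n - 2))) x).2 ⟨0, hm⟩ = x.2 ⟨0, hm⟩) ∧
      (∀ x : Pn R P₀ (n - 2),
        combine R P₀ (n - 2) hm b' a ((ε : Module.End R (Pn R P₀ (n - 2))) x)
          = combine R P₀ (n - 2) hm b' a x + w x.1 + l * x.2 ⟨0, hm⟩) with hGPdef
  have hGP0 : GP 0 0 := by
    refine ⟨1, one_mem _, fun x => rfl, fun x => rfl, fun x => ?_⟩
    show combine R P₀ (n - 2) hm b' a x = _
    simp
  have hGPadd : ∀ w1 l1 w2 l2, GP w1 l1 → GP w2 l2 → GP (w1 + w2) (l1 + l2) := by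
    rintro w1 l1 w2 l2 ⟨e1, he1, hp1, hq1, hc1⟩ ⟨e2, he2, hp2, hq2, hc2⟩
    refine ⟨e1 * e2, mul_mem he1 he2, fun x => ?_, fun x => ?_, fun x => ?_⟩
    · show ((e1 : Module.End R (Pn R P₀ (n - 2)))
        ((e2 : Module.End R (Pn R P₀ (n - 2))) x)).1 = x.1
      rw [hp1, hp2]
    · show ((e1 : Module.End R (Pn R P₀ (n - 2)))
        ((e2 : Module.End R (Pn R P₀ (n - 2))) x)).2 ⟨0, hm⟩ = x.2 ⟨0, hm⟩
      rw [hq1, hq2]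
    · show combine R P₀ (n - 2) hm b' a ((e1 : Module.End R (Pn R P₀ (n - 2)))
        ((e2 : Module.End R (Pn R P₀ (n - 2))) x)) = _
      rw [hc1, hp2, hq2, hc2]
      simp only [LinearMap.add_apply]
      ring
  have hGgen1 : ∀ i : Fin (n - 2), i ≠ ⟨0, hm⟩ → ∀ t : P₀ →ₗ[R] R,
      GP (coord R P₀ (n - 2) a i • t) 0 := by
    intro i hi t
    set s : Module.End R (Pn R P₀ (n - 2)) :=
      (inclF R P₀ (n - 2) i) ∘ₗ t ∘ₗ (proj0 R P₀ (n - 2)) with hsdef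
    have hss : s * s = 0 := by
      apply LinearMap.ext; intro x
      show s (s x) = 0
      simp [hsdef]
    refine ⟨elemUnit s hss, Subgroup.subset_closure (Or.inl ⟨i, t, rfl⟩),
      fun x => ?_, fun x => ?_, fun x => ?_⟩
    · show (x + s x).1 = x.1
      have : (s x).1 = 0 := by simp [hsdef]
      rw [Prod.fst_add, this, add_zero]
    · show (x + s x).2 ⟨0, hm⟩ = x.2 ⟨0, hm⟩
      have : (s x).2 ⟨0, hm⟩ = 0 := by
        simp [hsdef, Pi.single_eq_of_ne (Ne.symm hi)]
      rw [Prod.snd_add, Pi.add_apply, this, add_zero]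
    · show combine R P₀ (n - 2) hm b' a (x + s x) = _
      have h1 : s x = inclF R P₀ (n - 2) i (t x.1) := by simp [hsdef]
      rw [map_add, h1, combine_inclF hm b' a i hi]
      simp only [LinearMap.smul_apply, smul_eq_mul]
      ring
  have hGgen2 : ∀ i : Fin (n - 2), i ≠ ⟨0, hm⟩ → ∀ l : R,
      GP 0 (coord R P₀ (n - 2) a i * l) := by
    intro i hi l
    set s : Module.End R (Pn R P₀ (n - 2)) :=
      (inclF R P₀ (n - 2) i) ∘ₗ (l • (LinearMap.id : R →ₗ[R] R)) ∘ₗ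
        (projF R P₀ (n - 2) ⟨0, hm⟩) with hsdef
    have hss : s * s = 0 := by
      apply LinearMap.ext; intro x
      show s (s x) = 0
      have h1 : (s x).2 ⟨0, hm⟩ = 0 := by
        simp [hsdef, Pi.single_eq_of_ne (Ne.symm hi)]
      show (inclF R P₀ (n - 2) i) ((l • (LinearMap.id : R →ₗ[R] R))
        ((projF R P₀ (n - 2) ⟨0, hm⟩) (s x))) = 0
      rw [projF_apply, h1, map_zero, map_zero]
    refine ⟨elemUnit s hss, Subgroup.subset_closure (Or.inr (Or.inr
      ⟨i, ⟨0, hm⟩, hi, l • LinearMap.id, rfl⟩)), fun x => ?_, fun x => ?_, fun x => ?_⟩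
    · show (x + s x).1 = x.1
      have : (s x).1 = 0 := by simp [hsdef]
      rw [Prod.fst_add, this, add_zero]
    · show (x + s x).2 ⟨0, hm⟩ = x.2 ⟨0, hm⟩
      have : (s x).2 ⟨0, hm⟩ = 0 := by
        simp [hsdef, Pi.single_eq_of_ne (Ne.symm hi)]
      rw [Prod.snd_add, Pi.add_apply, this, add_zero]
    · show combine R P₀ (n - 2) hm b' a (x + s x) = _
      have h1 : s x = inclF R P₀ (n - 2) i (l * x.2 ⟨0, hm⟩) := by
        simp [hsdef, smul_eq_mul]
      rw [map_add, h1, combine_inclF hm b' a i hi]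
      simp only [LinearMap.zero_apply]
      ring
  have hGI1 : ∀ x ∈ I, ∀ t : P₀ →ₗ[R] R, GP (x • t) 0 := by
    intro x hx
    rw [hI] at hx
    induction hx using Submodule.span_induction with
    | mem y hy =>
      obtain ⟨i, hiz, rfl⟩ := hy
      exact fun t => hGgen1 i hiz t
    | zero =>
      intro t
      rw [zero_smul]
      exact hGP0
    | add y y' hy hy' ihy ihy' =>
      intro t
      rw [add_smul]
      have := hGPadd _ _ _ _ (ihy t) (ihy' t)
      simpa using this
    | smul r y hy ihy =>
      intro t
      have h := ihy (r • t)
      have e : y • (r • t) = (r • y) • t := by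
        rw [smul_smul, smul_eq_mul, mul_comm]
      rw [e] at h
      exact h
  have hGI2 : ∀ x ∈ I, ∀ l : R, GP 0 (x * l) := by
    intro x hx
    rw [hI] at hx
    induction hx using Submodule.span_induction with
    | mem y hy =>
      obtain ⟨i, hiz, rfl⟩ := hy
      exact fun l => hGgen2 i hiz l
    | zero =>
      intro l
      rw [zero_mul]
      exact hGP0
    | add y y' hy hy' ihy ihy' =>
      intro l
      rw [add_mul]
      have := hGPadd _ _ _ _ (ihy l) (ihy' l)
      simpa using this
    | smul r y hy ihy =>
      intro l
      have h := ihy (r * l)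
      have e : y * (r * l) = (r • y) * l := by
        rw [smul_eq_mul]; ring
      rw [e] at h
      exact h
  have hGw : ∀ w : P₀ →ₗ[R] R, (∀ p, w p ∈ I) → GP w 0 := by
    intro w hw
    obtain ⟨k, f, g, hfs, -, hfg⟩ := Module.Finite.exists_comp_eq_id_of_projective R P₀
    have hdecomp : w = ∑ j : Fin k,
        (w (f ((Pi.single j 1 : Fin k → R)))) • ((LinearMap.proj j : (Fin k → R) →ₗ[R] R) ∘ₗ g) := by
      apply LinearMap.ext; intro p
      have h1 : p = f (g p) := (LinearMap.congr_fun hfg p).symm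
      conv_lhs => rw [h1]
      have h2 : g p = ∑ j, (g p j) • (Pi.single j 1 : Fin k → R) := by
        conv_lhs => rw [← Finset.univ_sum_single (g p)]
        refine Finset.sum_congr rfl fun j _ => ?_
        rw [← Pi.single_smul, smul_eq_mul, mul_one]
      rw [h2, map_sum, map_sum]
      rw [LinearMap.sum_apply]
      refine Finset.sum_congr rfl fun j _ => ?_
      rw [map_smul, map_smul, smul_eq_mul, LinearMap.smul_apply, LinearMap.comp_apply,
        LinearMap.proj_apply, smul_eq_mul]
      ring
    rw [hdecomp]
    have key : ∀ sf : Finset (Fin k), GP (∑ j ∈ sf,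
        (w (f ((Pi.single j 1 : Fin k → R)))) • ((LinearMap.proj j : (Fin k → R) →ₗ[R] R) ∘ₗ g)) 0 := by
      intro sf
      induction sf using Finset.induction_on with
      | empty => simpa using hGP0
      | @insert j sf' hj ih =>
        rw [Finset.sum_insert hj]
        have := hGPadd _ _ _ _ (hGI1 (w (f ((Pi.single j 1 : Fin k → R))))
          (hw _) ((LinearMap.proj j : (Fin k → R) →ₗ[R] R) ∘ₗ g)) ih
        simpa using this
    exact key Finset.univ
  -- main construction
  obtain ⟨ubar, humem, hcomp⟩ := horbit
  obtain ⟨φ, hφmem, hφQ, hφF⟩ := hlift ubar humem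
  set c : Pn R P₀ (n - 2) →ₗ[R] R :=
    (combine R P₀ (n - 2) hm b a) ∘ₗ (φ : Module.End R (Pn R P₀ (n - 2)))
      - combine R P₀ (n - 2) hm b' a with hcdef
  have hcapp : ∀ x, c x = combine R P₀ (n - 2) hm b a
      ((φ : Module.End R (Pn R P₀ (n - 2))) x) - combine R P₀ (n - 2) hm b' a x :=
    fun x => rfl
  have hcI : ∀ x, c x ∈ I := by
    intro x
    rw [← Ideal.Quotient.eq_zero_iff_mem, hcapp, map_sub,
      hmod b bbar hb ((φ : Module.End R (Pn R P₀ (n - 2))) x), hmod b' b'bar hb' x,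
      hφQ x, hcomp, LinearMap.comp_apply, sub_self]
  have hcF : ∀ i : Fin (n - 2), i ≠ ⟨0, hm⟩ → ∀ r : R, c (inclF R P₀ (n - 2) i r) = 0 := by
    intro i hi r
    rw [hcapp, hφF i hi r, combine_inclF hm b a i hi, combine_inclF hm b' a i hi, sub_self]
  have hcdec : ∀ y : Pn R P₀ (n - 2),
      c y = c (y.1, 0) + c (inclF R P₀ (n - 2) ⟨0, hm⟩ 1) * y.2 ⟨0, hm⟩ := by
    intro y
    have hy : y = (y.1, 0) + ∑ i : Fin (n - 2), inclF R P₀ (n - 2) i (y.2 i) := by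
      refine Prod.ext ?_ ?_
      · simp [Prod.fst_sum]
      · simp [Prod.snd_sum, Finset.univ_sum_single]
    conv_lhs => rw [hy]
    rw [map_add, map_sum, Finset.sum_eq_single (⟨0, hm⟩ : Fin (n - 2))]
    · have h3 : inclF R P₀ (n - 2) ⟨0, hm⟩ (y.2 ⟨0, hm⟩)
          = (y.2 ⟨0, hm⟩) • inclF R P₀ (n - 2) ⟨0, hm⟩ 1 := by
        rw [← map_smul, smul_eq_mul, mul_one]
      rw [h3, map_smul, smul_eq_mul]
      ring
    · intro j _ hj
      exact hcF j hj _
    · intro h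
      exact absurd (Finset.mem_univ _) h
  have hc0I : ∀ p : P₀, (c ∘ₗ incl0 R P₀ (n - 2)) p ∈ I := fun p => hcI _
  have hneg1 : GP (-(c ∘ₗ incl0 R P₀ (n - 2))) 0 := by
    refine hGw _ fun p => ?_
    rw [LinearMap.neg_apply]
    exact neg_mem (hc0I p)
  have hneg2 : GP 0 (-(c (inclF R P₀ (n - 2) ⟨0, hm⟩ 1))) := by
    have := hGI2 _ (neg_mem (hcI (inclF R P₀ (n - 2) ⟨0, hm⟩ 1))) 1
    rwa [mul_one] at this
  obtain ⟨ε, hεmem, hεp, hεq, hεc⟩ := hGPadd _ _ _ _ hneg1 hneg2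
  refine ⟨hsurj b bbar hb hbsurj, hsurj b' b'bar hb' hb'surj, φ * ε,
    mul_mem hφmem hεmem, ?_⟩
  apply LinearMap.ext; intro x
  show combine R P₀ (n - 2) hm b a ((φ : Module.End R (Pn R P₀ (n - 2)))
    ((ε : Module.End R (Pn R P₀ (n - 2))) x)) = combine R P₀ (n - 2) hm b' a x
  have e1 : combine R P₀ (n - 2) hm b a ((φ : Module.End R (Pn R P₀ (n - 2)))
      ((ε : Module.End R (Pn R P₀ (n - 2))) x))
      = combine R P₀ (n - 2) hm b' a ((ε : Module.End R (Pn R P₀ (n - 2))) x)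
        + c ((ε : Module.End R (Pn R P₀ (n - 2))) x) := by
    rw [hcapp]; ring
  rw [e1, hεc x, hcdec ((ε : Module.End R (Pn R P₀ (n - 2))) x), hεp, hεq]
  simp only [LinearMap.add_apply, LinearMap.neg_apply, LinearMap.zero_apply,
    LinearMap.comp_apply, incl0_apply]
  ring
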